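/- Let n ≥ 1 and k ≥ 3. If r and s are integers with r ≥ k, s ≥ k, and r ≡ s (mod 2^{k-2}), then A^r_n ≡ A^s_n (mod 2^k). -/

import Mathlib

/-- The descent set of a permutation `π` of `{1,…,n}` (realized as `Equiv.Perm (Fin n)`),
as a subset of `[n-1] = {1,…,n-1}`: those positions `i` with `π_i > π_{i+1}`. -/
def descSet (n : ℕ) (π : Equiv.Perm (Fin n)) : Finset ℕ :=
  (Finset.Icc 1 (n - 1)).filter fun i =>
    ∀ (h1 : i - 1 < n) (h2 : i < n), π ⟨i, h2⟩ < π ⟨i - 1, h1⟩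

/-- The descent set statistic `β_n(S)`: the number of permutations of `{1,…,n}`
with descent set exactly `S`. -/
def descStat (n : ℕ) (S : Finset ℕ) : ℕ :=
  (Finset.univ.filter fun π : Equiv.Perm (Fin n) => descSet n π = S).card

/-- `A^r_n = Σ_{S ⊆ [n-1]} β_n(S)^r`. -/
def powSumDes (r n : ℕ) : ℕ :=
  ∑ S ∈ (Finset.Icc 1 (n - 1)).powerset, descStat n S ^ r

lemma sq_sub_one (x : ℕ) (hx : 1 ≤ x) : x ^ 2 - 1 = (x - 1) * (x + 1) := by
  obtain ⟨y, rfl⟩ := Nat.exists_eq_add_of_le hx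
  have h : (1 + y) ^ 2 = y * (y + 2) + 1 := by ring
  rw [h, Nat.add_sub_cancel]
  congr 1 <;> omega

lemma odd_pow_two_pow (b : ℕ) (hb : Odd b) :
    ∀ j, 1 ≤ j → 2 ^ (j + 2) ∣ b ^ (2 ^ j) - 1 := by
  intro j hj
  induction j, hj using Nat.le_induction with
  | base =>
    obtain ⟨m, rfl⟩ := hb
    have h1 : (2 * m + 1) ^ (2 ^ 1) = 4 * (m * (m + 1)) + 1 := by ring
    obtain ⟨t, ht⟩ := Nat.even_mul_succ_self m
    exact ⟨t, by omega⟩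
  | succ j hj ih =>
    have hxodd : Odd (b ^ (2 ^ j)) := hb.pow
    have hsq : b ^ (2 ^ (j + 1)) = (b ^ (2 ^ j)) ^ 2 := by
      rw [← pow_mul, pow_succ]
    obtain ⟨m, hm⟩ := hxodd
    have h2 : 2 ∣ b ^ (2 ^ j) + 1 := ⟨m + 1, by omega⟩
    rw [hsq, sq_sub_one _ (by omega)]
    calc 2 ^ (j + 1 + 2) = 2 ^ (j + 2) * 2 := by ring
    _ ∣ (b ^ (2 ^ j) - 1) * (b ^ (2 ^ j) + 1) := mul_dvd_mul ih h2

lemma pow_modeq_pow_le (b k r s : ℕ) (hk : 3 ≤ k) (hr : k ≤ r) (hs : k ≤ s)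
    (hrs : r ≡ s [MOD 2 ^ (k - 2)]) (hle : r ≤ s) : b ^ r ≡ b ^ s [MOD 2 ^ k] := by
  rcases Nat.even_or_odd b with heb | hob
  · have hdvd : ∀ m, k ≤ m → 2 ^ k ∣ b ^ m := fun m hm =>
      dvd_trans (pow_dvd_pow_of_dvd heb.two_dvd k) (pow_dvd_pow b hm)
    have h1 : b ^ r ≡ 0 [MOD 2 ^ k] := (Nat.modEq_zero_iff_dvd).mpr (hdvd r hr)
    have h2 : b ^ s ≡ 0 [MOD 2 ^ k] := (Nat.modEq_zero_iff_dvd).mpr (hdvd s hs)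
    exact h1.trans h2.symm
  · obtain ⟨t, ht⟩ := (Nat.modEq_iff_dvd' hle).mp hrs
    have hs' : s = r + 2 ^ (k - 2) * t := by omega
    have hone : b ^ (2 ^ (k - 2)) ≡ 1 [MOD 2 ^ k] := by
      have := odd_pow_two_pow b hob (k - 2) (by omega)
      have hkeq : k - 2 + 2 = k := by omega
      rw [hkeq] at this
      exact ((Nat.modEq_iff_dvd' (Nat.one_le_pow _ _ hob.pos)).mpr this).symm
    calc b ^ r = b ^ r * 1 ^ t := by ring
    _ ≡ b ^ r * (b ^ (2 ^ (k - 2))) ^ t [MOD 2 ^ k] :=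
        Nat.ModEq.mul_left _ ((hone.symm).pow t)
    _ = b ^ s := by rw [hs', ← pow_mul, ← pow_add]

lemma pow_modeq_pow (b k r s : ℕ) (hk : 3 ≤ k) (hr : k ≤ r) (hs : k ≤ s)
    (hrs : r ≡ s [MOD 2 ^ (k - 2)]) : b ^ r ≡ b ^ s [MOD 2 ^ k] := by
  rcases le_total r s with hle | hle
  · exact pow_modeq_pow_le b k r s hk hr hs hrs hle
  · exact (pow_modeq_pow_le b k s r hk hs hr hrs.symm hle).symm

lemma modeq_sum {ι : Type*} (s : Finset ι) (f g : ι → ℕ) (m : ℕ)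
    (h : ∀ i ∈ s, f i ≡ g i [MOD m]) : ∑ i ∈ s, f i ≡ ∑ i ∈ s, g i [MOD m] := by
  classical
  induction s using Finset.induction with
  | empty => rfl
  | insert _ _ hx ih =>
    rw [Finset.sum_insert hx, Finset.sum_insert hx]
    exact (h _ (Finset.mem_insert_self _ _)).add
      (ih fun i hi => h i (Finset.mem_insert_of_mem hi))

theorem stmt1 (n k r s : ℕ) (hn : 1 ≤ n) (hk : 3 ≤ k)
    (hr : k ≤ r) (hs : k ≤ s) (hrs : r ≡ s [MOD 2 ^ (k - 2)]) :
    powSumDes r n ≡ powSumDes s n [MOD 2 ^ k] := by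
  unfold powSumDes
  exact modeq_sum _ _ _ _ fun S _ => pow_modeq_pow _ k r s hk hr hs hrs
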